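/- With h a random boolean function on a finite domain X where each h(x) is independently 1 with probability α/2 (0 < α ≤ 1), and c_j the point function at j ∈ X, for any distribution D on X: Pr[error_D(c_j, h) ≤ α] ≥ α/4. -/
import Mathlib

open scoped Classical
noncomputable section

lemma sum_prod_bool {X : Type*} [Fintype X] [DecidableEq X] (g : X → Bool → ℝ) :
    ∑ h : X → Bool, ∏ x, g x (h x) = ∏ x, (g x false + g x true) := by
  rw [← Fintype.prod_sum]
  congr 1
  ext x
  simp [Fintype.sum_bool, add_comm]

/-- Generalization error of `h` w.r.t. target `c` under distribution `D` on a finite domain. -/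
def errD {X : Type*} [Fintype X] (D : X → ℝ) (c h : X → Bool) : ℝ :=
  ∑ x, D x * (if h x = c x then 0 else 1)

/-- With `h` a random boolean function on a finite domain `X`, each value
`h x` independently `true` with probability `α/2` (for `0 < α ≤ 1`), and `c_j` the point
function at `j ∈ X`, for any distribution `D` on `X`:
`Pr[error_D(c_j, h) ≤ α] ≥ α/4`. -/
theorem stmt_8 {X : Type*} [Fintype X] [DecidableEq X] (j : X)
    (D : X → ℝ) (hD : ∀ x, 0 ≤ D x) (hD1 : ∑ x, D x = 1)
    (α : ℝ) (hα : 0 < α) (hα1 : α ≤ 1)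
    (μ : (X → Bool) → ℝ)
    (hμ : ∀ h, μ h = ∏ x, (if h x then α / 2 else 1 - α / 2)) :
    α / 4 ≤ ∑ h ∈ Finset.univ.filter
        (fun h : X → Bool => errD D (fun x => decide (x = j)) h ≤ α), μ h := by
  classical
  set p : ℝ := α / 2 with hp
  have hp0 : 0 < p := by positivity
  have hq0 : 0 ≤ 1 - p := by simp only [hp]; linarith
  set c : X → Bool := fun x => decide (x = j) with hc
  set err : (X → Bool) → ℝ := fun h => errD D c h with herr
  have herr0 : ∀ h, 0 ≤ err h := by
    intro h
    apply Finset.sum_nonneg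
    intro x _
    have := hD x
    positivity
  have hμ0 : ∀ h, 0 ≤ μ h := by
    intro h
    rw [hμ]
    apply Finset.prod_nonneg
    intro x _
    split <;> linarith
  -- L1 : mass of {h j = true} is p
  have L1 : ∑ h : X → Bool, (if h j = true then μ h else 0) = p := by
    have key : ∀ h : X → Bool, (if h j = true then μ h else 0)
        = ∏ x, (if x = j then (if h x then p else 0)
            else (if h x then p else 1 - p)) := by
      intro h
      by_cases hj : h j = true
      · simp only [hj, if_true, hμ]
        apply Finset.prod_congr rfl
        intro x _
        by_cases hx : x = j <;> simp [hx, hj, hp]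
      · rw [if_neg hj]
        symm
        apply Finset.prod_eq_zero (Finset.mem_univ j)
        simp only [Bool.not_eq_true] at hj
        simp [hj]
    have hsp := sum_prod_bool (fun x b => if x = j then (if b then p else 0)
            else (if b then p else 1 - p))
    rw [Finset.sum_congr rfl (fun h _ => key h)]
    refine hsp.trans ?_
    rw [Finset.prod_eq_single j]
    · simp
    · intro x _ hx; simp [hx]
    · simp
  -- L2 : for i ≠ j, mass of {h j = true ∧ h i = true} is p^2
  have L2 : ∀ i : X, i ≠ j →
      ∑ h : X → Bool, (if h j = true ∧ h i = true then μ h else 0) = p ^ 2 := by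
    intro i hij
    have key : ∀ h : X → Bool, (if h j = true ∧ h i = true then μ h else 0)
        = ∏ x, (if x = j ∨ x = i then (if h x then p else 0)
            else (if h x then p else 1 - p)) := by
      intro h
      by_cases hcond : h j = true ∧ h i = true
      · rw [if_pos hcond, hμ]
        apply Finset.prod_congr rfl
        intro x _
        by_cases hx : x = j ∨ x = i
        · rcases hx with hx | hx <;> simp [hx, hcond.1, hcond.2, hp]
        · simp [hx, hp]
      · rw [if_neg hcond]
        symm
        rw [not_and_or] at hcond
        rcases hcond with hj' | hi'
        · apply Finset.prod_eq_zero (Finset.mem_univ j)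
          simp only [Bool.not_eq_true] at hj'
          simp [hj']
        · apply Finset.prod_eq_zero (Finset.mem_univ i)
          simp only [Bool.not_eq_true] at hi'
          simp [hi', hij]
    have hsp := sum_prod_bool (fun x b => if x = j ∨ x = i then (if b then p else 0)
            else (if b then p else 1 - p))
    rw [Finset.sum_congr rfl (fun h _ => key h)]
    refine hsp.trans ?_
    have key2 : ∀ x : X, ((if x = j ∨ x = i then (if false then p else (0:ℝ))
            else (if false then p else 1 - p)) +
          (if x = j ∨ x = i then (if true then p else 0)
            else (if true then p else 1 - p)))
        = (if x = j then p else 1) * (if x = i then p else 1) := by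
      intro x
      by_cases hx1 : x = j
      · subst hx1
        have : ¬ (x = i) := fun h' => hij (h' ▸ rfl)
        simp [this]
      · by_cases hx2 : x = i <;> simp [hx1, hx2, hij]
    rw [Finset.prod_congr rfl (fun x _ => key2 x), Finset.prod_mul_distrib,
        Finset.prod_ite_eq' Finset.univ j (fun _ => p),
        Finset.prod_ite_eq' Finset.univ i (fun _ => p)]
    simp [sq]
  -- expected error on the event {h j = true}
  have hE : ∑ h : X → Bool, (if h j = true then μ h * err h else 0) ≤ p ^ 2 := by
    have expand : ∀ h : X → Bool, (if h j = true then μ h * err h else 0)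
        = ∑ x : X, D x * (if h j = true then μ h * (if h x = c x then 0 else 1) else 0) := by
      intro h
      by_cases hj' : h j = true
      · simp only [hj', if_true, herr, errD, Finset.mul_sum]
        apply Finset.sum_congr rfl
        intro x _
        ring
      · simp [hj']
    rw [Finset.sum_congr rfl (fun h _ => expand h), Finset.sum_comm]
    have hinner : ∀ x : X,
        (∑ h : X → Bool, D x * (if h j = true then μ h * (if h x = c x then 0 else 1) else 0))
        = D x * (if x = j then 0 else p ^ 2) := by
      intro x
      rw [← Finset.mul_sum]
      congr 1
      by_cases hx : x = j
      · rw [if_pos hx, hx]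
        apply Finset.sum_eq_zero
        intro h _
        by_cases hj' : h j = true
        · simp [hj', hc]
        · simp [hj']
      · rw [if_neg hx, ← L2 x hx]
        apply Finset.sum_congr rfl
        intro h _
        by_cases hj' : h j = true
        · simp only [hj', true_and, if_true]
          by_cases hx' : h x = true
          · simp [hx', hc, hx]
          · simp only [Bool.not_eq_true] at hx'
            simp [hx', hc, hx]
        · simp [hj']
    rw [Finset.sum_congr rfl (fun x _ => hinner x)]
    calc ∑ x : X, D x * (if x = j then 0 else p ^ 2)
        ≤ ∑ x : X, D x * p ^ 2 := by
          apply Finset.sum_le_sum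
          intro x _
          apply mul_le_mul_of_nonneg_left _ (hD x)
          split
          · positivity
          · exact le_refl _
      _ = p ^ 2 := by rw [← Finset.sum_mul, hD1, one_mul]
  -- Markov: bad event has mass ≤ α/4
  have hB : ∑ h : X → Bool, (if h j = true ∧ ¬ err h ≤ α then μ h else 0) ≤ α / 4 := by
    have markov : α * ∑ h : X → Bool, (if h j = true ∧ ¬ err h ≤ α then μ h else 0)
        ≤ ∑ h : X → Bool, (if h j = true then μ h * err h else 0) := by
      rw [Finset.mul_sum]
      apply Finset.sum_le_sum
      intro h _
      by_cases hcond : h j = true ∧ ¬ err h ≤ α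
      · rw [if_pos hcond, if_pos hcond.1]
        have hgt : α ≤ err h := le_of_lt (lt_of_not_ge hcond.2)
        calc α * μ h = μ h * α := mul_comm _ _
          _ ≤ μ h * err h := mul_le_mul_of_nonneg_left hgt (hμ0 h)
      · rw [if_neg hcond]
        simp only [mul_zero]
        split
        · exact mul_nonneg (hμ0 h) (herr0 h)
        · exact le_refl 0
    have : α * ∑ h : X → Bool, (if h j = true ∧ ¬ err h ≤ α then μ h else 0) ≤ p ^ 2 :=
      le_trans markov hE
    have hp2 : p ^ 2 = α * (α / 4) := by rw [hp]; ring
    rw [hp2] at this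
    exact le_of_mul_le_mul_left this hα
  -- good event
  have hG : α / 4 ≤ ∑ h : X → Bool, (if h j = true ∧ err h ≤ α then μ h else 0) := by
    have split : ∑ h : X → Bool, (if h j = true then μ h else 0)
        = ∑ h : X → Bool, (if h j = true ∧ err h ≤ α then μ h else 0)
          + ∑ h : X → Bool, (if h j = true ∧ ¬ err h ≤ α then μ h else 0) := by
      rw [← Finset.sum_add_distrib]
      apply Finset.sum_congr rfl
      intro h _
      by_cases hj' : h j = true
      · by_cases he : err h ≤ α <;> simp [hj', he]
      · simp [hj']
    have := L1
    rw [split] at this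
    have hpval : p = α / 2 := hp
    linarith [hB]
  -- conclude
  calc α / 4 ≤ ∑ h : X → Bool, (if h j = true ∧ err h ≤ α then μ h else 0) := hG
    _ ≤ ∑ h : X → Bool, (if err h ≤ α then μ h else 0) := by
        apply Finset.sum_le_sum
        intro h _
        by_cases hcond : h j = true ∧ err h ≤ α
        · rw [if_pos hcond, if_pos hcond.2]
        · rw [if_neg hcond]
          split
          · exact hμ0 h
          · exact le_refl 0
    _ = ∑ h ∈ Finset.univ.filter
        (fun h : X → Bool => errD D (fun x => decide (x = j)) h ≤ α), μ h := by
        rw [Finset.sum_filter]
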